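/- Let T be a bounded expansive operator (T*T ≥ I) on a Hilbert space H whose restriction to a closed invariant subspace M is invertible and is an isometry on M (for instance when T|_M is both expansive and has spectrum in the unit circle with ‖T x‖ = ‖x‖ for x ∈ M). If T|_M is unitary on M, then M reduces T, i.e., M is also invariant under T*. -/

import Mathlib

open ContinuousLinearMap

local notation "⟪" x ", " y "⟫" => @inner ℂ _ _ x y

lemma expand_sq {H : Type*} [NormedAddCommGroup H] [InnerProductSpace ℂ H]
    (u v : H) (t : ℝ) :
    ‖u + (t : ℂ) • v‖ ^ 2 = ‖u‖ ^ 2 + 2 * (t * Complex.re ⟪u, v⟫) + t ^ 2 * ‖v‖ ^ 2 := by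
  rw [norm_add_sq (𝕜 := ℂ), inner_smul_right, norm_smul]
  simp [Complex.mul_re, Complex.norm_real, mul_pow, sq_abs]

lemma key_re {H : Type*} [NormedAddCommGroup H] [InnerProductSpace ℂ H]
    (T : H →L[ℂ] H) (hexp : ∀ x : H, ‖x‖ ≤ ‖T x‖)
    (y z : H) (hy : ‖T y‖ = ‖y‖) :
    Complex.re ⟪T y, T z⟫ = Complex.re ⟪y, z⟫ := by
  set a : ℝ := ‖T z‖ ^ 2 - ‖z‖ ^ 2 with ha
  set b : ℝ := Complex.re ⟪T y, T z⟫ - Complex.re ⟪y, z⟫ with hb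
  have ha0 : 0 ≤ a := by
    have := hexp z
    have hz : 0 ≤ ‖z‖ := norm_nonneg z
    nlinarith
  have hq : ∀ t : ℝ, 0 ≤ a * t ^ 2 + 2 * b * t := by
    intro t
    have h1 : ‖y + (t : ℂ) • z‖ ≤ ‖T (y + (t : ℂ) • z)‖ := hexp _
    have h2 : T (y + (t : ℂ) • z) = T y + (t : ℂ) • T z := by
      simp [map_add, map_smul]
    have h3 : ‖y + (t : ℂ) • z‖ ^ 2 ≤ ‖T (y + (t : ℂ) • z)‖ ^ 2 := by
      have := norm_nonneg (y + (t : ℂ) • z)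
      nlinarith
    rw [h2, expand_sq, expand_sq, hy] at h3
    rw [ha, hb]
    nlinarith
  have hkey : b = 0 := by
    by_contra hb0
    have h := hq (-b / (a + 1))
    have hap : (0 : ℝ) < a + 1 := by linarith
    have hpos : (0 : ℝ) < (a + 1) ^ 2 := by positivity
    have heq : a * (-b / (a + 1)) ^ 2 + 2 * b * (-b / (a + 1))
        = -(b ^ 2 * (a + 2)) / (a + 1) ^ 2 := by
      field_simp
      ring
    rw [heq] at h
    have h2 : 0 ≤ -(b ^ 2 * (a + 2)) := by
      have := mul_nonneg h (le_of_lt hpos)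
      rwa [div_mul_cancel₀ _ (ne_of_gt hpos)] at this
    have h3 : 0 < b ^ 2 * (a + 2) :=
      mul_pos (by positivity) (by linarith)
    linarith
  have := hkey
  rw [hb] at this
  linarith

lemma key_inner {H : Type*} [NormedAddCommGroup H] [InnerProductSpace ℂ H]
    (T : H →L[ℂ] H) (hexp : ∀ x : H, ‖x‖ ≤ ‖T x‖)
    (y z : H) (hy : ‖T y‖ = ‖y‖) :
    ⟪T y, T z⟫ = ⟪y, z⟫ := by
  have hre := key_re T hexp y z hy
  have him := key_re T hexp y (Complex.I • z) hy
  rw [map_smul, inner_smul_right, inner_smul_right] at him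
  simp [Complex.mul_re] at him
  exact Complex.ext hre him

theorem stmt_18 {H : Type*} [NormedAddCommGroup H] [InnerProductSpace ℂ H]
    [CompleteSpace H] (T : H →L[ℂ] H)
    (hexp : ∀ x : H, ‖x‖ ≤ ‖T x‖)
    (M : Submodule ℂ H) (hclosed : IsClosed (M : Set H))
    (hTM : ⇑T '' (M : Set H) = (M : Set H))
    (hiso : ∀ x ∈ M, ‖T x‖ = ‖x‖) :
    ∀ x ∈ M, adjoint T x ∈ M := by
  intro x hx
  have hx' : x ∈ ⇑T '' (M : Set H) := by rw [hTM]; exact hx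
  obtain ⟨y, hyM, hyx⟩ := hx'
  have : adjoint T x = y := by
    apply ext_inner_right ℂ
    intro z
    rw [adjoint_inner_left, ← hyx, key_inner T hexp y z (hiso y hyM)]
  rw [this]
  exact hyM
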